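/- Let G be a finite simple connected graph on n vertices with Sudoku number sn(G) = n − 1, let φ be a 1-minimal proper χ(G)-colouring of G, and let v be a vertex with φ(v) = 1. Then the closed neighbourhood {v} ∪ N(v) induces a complete subgraph of G, i.e. any two distinct vertices of {v} ∪ N(v) are adjacent in G. -/

import Mathlib

/-- A proper `k`-colouring of `G` using colours `{1, …, k}`. -/
def IsProperColouring {V : Type*} (G : SimpleGraph V) (k : ℕ) (φ : V → ℕ) : Prop :=
  (∀ v, φ v ∈ Finset.Icc 1 k) ∧ ∀ ⦃u v⦄, G.Adj u v → φ u ≠ φ v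

/-- A partial proper `k`-colouring of `G` (uncoloured vertices get `none`). -/
def IsPartialProper {V : Type*} (G : SimpleGraph V) (k : ℕ) (ψ : V → Option ℕ) : Prop :=
  (∀ v c, ψ v = some c → c ∈ Finset.Icc 1 k) ∧
    ∀ ⦃u v⦄, G.Adj u v → ∀ c, ψ u = some c → ψ v ≠ some c

/-- `φ` extends the partial colouring `ψ`. -/
def ExtendsPartial {V : Type*} (φ : V → ℕ) (ψ : V → Option ℕ) : Prop :=
  ∀ v c, ψ v = some c → φ v = c

/-- A Sudoku colouring: a partial proper `k`-colouring with exactly one extension to a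
proper `k`-colouring of all of `G`. -/
def IsSudoku {V : Type*} (G : SimpleGraph V) (k : ℕ) (ψ : V → Option ℕ) : Prop :=
  IsPartialProper G k ψ ∧ ∃! φ : V → ℕ, IsProperColouring G k φ ∧ ExtendsPartial φ ψ

/-- The Sudoku number: the least number of coloured vertices in a Sudoku colouring. -/
noncomputable def sudokuNumber {V : Type*} [Fintype V] (G : SimpleGraph V) (k : ℕ) : ℕ :=
  sInf {m | ∃ ψ : V → Option ℕ, IsSudoku G k ψ ∧
    (Finset.univ.filter fun v => (ψ v).isSome).card = m}

/-- The set of colours appearing on the coloured neighbours of `v` under `ψ`. -/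
def nbrColours {V : Type*} [Fintype V] [DecidableEq V] (G : SimpleGraph V)
    [DecidableRel G.Adj] (ψ : V → Option ℕ) (v : V) : Finset ℕ :=
  (G.neighborFinset v).biUnion fun u => (ψ u).toFinset

/-- A vertex is full (w.r.t. a proper `k`-colouring `φ`) if every colour other than its own
appears on its neighbourhood. -/
def IsFull {V : Type*} [Fintype V] [DecidableEq V] (G : SimpleGraph V)
    [DecidableRel G.Adj] (k : ℕ) (φ : V → ℕ) (v : V) : Prop :=
  (G.neighborFinset v).image φ = Finset.Icc 1 k \ {φ v}

/-- A proper `k`-colouring is 1-minimal if it has as few colour-1 vertices as possible. -/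
def IsOneMinimal {V : Type*} [Fintype V] (G : SimpleGraph V) (k : ℕ) (φ : V → ℕ) : Prop :=
  IsProperColouring G k φ ∧ ∀ φ' : V → ℕ, IsProperColouring G k φ' →
    (Finset.univ.filter fun v => φ v = 1).card ≤ (Finset.univ.filter fun v => φ' v = 1).card

set_option linter.unusedSectionVars false

section Aux
variable {V : Type*} [Fintype V] [DecidableEq V] (G : SimpleGraph V) [DecidableRel G.Adj] (k : ℕ)

/-- Fullness: in a 1-minimal colouring every colour `≠ 1` appears on the neighbourhood of a
colour-1 vertex. -/
lemma lem_full (φ : V → ℕ) (hφ : IsOneMinimal G k φ) (v : V) (hv : φ v = 1)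
    (d : ℕ) (hd : d ∈ Finset.Icc 1 k) (hd1 : d ≠ 1) :
    ∃ y, G.Adj v y ∧ φ y = d := by
  by_contra h
  push_neg at h
  set θ := Function.update φ v d with hθdef
  have hprop : IsProperColouring G k θ := by
    constructor
    · intro y
      by_cases hy : y = v
      · subst hy; simpa [θ] using hd
      · simpa [θ, Function.update_of_ne hy] using hφ.1.1 y
    · intro p q hpq
      have hne : p ≠ q := G.ne_of_adj hpq
      by_cases hp : p = v
      · have hq : q ≠ v := fun h' => hne (hp.trans h'.symm)
        rw [hp, hθdef, Function.update_self, Function.update_of_ne hq]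
        exact fun h' => h q (hp ▸ hpq) h'.symm
      · by_cases hq : q = v
        · rw [hθdef, Function.update_of_ne hp, hq, Function.update_self]
          exact h p (G.adj_symm (hq ▸ hpq))
        · rw [hθdef, Function.update_of_ne hp, Function.update_of_ne hq]
          exact hφ.1.2 hpq
  have hle := hφ.2 θ hprop
  have hset : (Finset.univ.filter fun y => θ y = 1)
      = (Finset.univ.filter fun y => φ y = 1).erase v := by
    ext y
    by_cases hy : y = v
    · subst hy
      simp [θ, Function.update_self, hd1]
    · simp [θ, Function.update_of_ne hy, hy]
  have hvmem : v ∈ Finset.univ.filter fun y => φ y = 1 := by simp [hv]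
  have hcerase := Finset.card_erase_of_mem hvmem
  have hpos := Finset.card_pos.mpr ⟨v, hvmem⟩
  rw [hset, hcerase] at hle
  omega

/-- Swapping the colour of a neighbour of a colour-1 vertex to an unused colour preserves
1-minimality. -/
lemma lem_swap_min (φ : V → ℕ) (hφ : IsOneMinimal G k φ) (v : V) (hv : φ v = 1)
    (x : V) (hx : G.Adj v x) (c' : ℕ) (hc'k : c' ∈ Finset.Icc 1 k)
    (havoid : ∀ y, G.Adj x y → φ y ≠ c') :
    IsOneMinimal G k (Function.update φ x c') ∧ Function.update φ x c' v = 1 := by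
  have hvx : v ≠ x := fun h => G.irrefl (h ▸ hx)
  have hc'1 : c' ≠ 1 := fun h => havoid v (G.adj_symm hx) (by rw [hv, h])
  have hx1 : φ x ≠ 1 := fun h => (hφ.1.2 hx) (by rw [hv, h])
  have hprop : IsProperColouring G k (Function.update φ x c') := by
    constructor
    · intro y
      by_cases hy : y = x
      · subst hy; simpa using hc'k
      · simpa [Function.update_of_ne hy] using hφ.1.1 y
    · intro p q hpq
      have hne : p ≠ q := G.ne_of_adj hpq
      by_cases hp : p = x
      · have hq : q ≠ x := fun h' => hne (hp.trans h'.symm)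
        rw [hp, Function.update_self, Function.update_of_ne hq]
        exact fun h' => havoid q (hp ▸ hpq) h'.symm
      · by_cases hq : q = x
        · rw [Function.update_of_ne hp, hq, Function.update_self]
          exact havoid p (G.adj_symm (hq ▸ hpq))
        · rw [Function.update_of_ne hp, Function.update_of_ne hq]
          exact hφ.1.2 hpq
  have hset : (Finset.univ.filter fun y => Function.update φ x c' y = 1)
      = Finset.univ.filter fun y => φ y = 1 := by
    ext y
    by_cases hy : y = x
    · subst hy; simp [Function.update_self, hc'1, hx1]
    · simp [Function.update_of_ne hy]
  refine ⟨⟨hprop, fun φ'' h'' => ?_⟩, by rw [Function.update_of_ne hvx]; exact hv⟩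
  rw [hset]
  exact hφ.2 φ'' h''

/-- A swappable neighbour's colour repeats on the neighbourhood of `v`. -/
lemma lem_repeat (φ : V → ℕ) (hφ : IsOneMinimal G k φ) (v : V) (hv : φ v = 1)
    (x : V) (hx : G.Adj v x) (c' : ℕ) (hc'k : c' ∈ Finset.Icc 1 k)
    (havoid : ∀ y, G.Adj x y → φ y ≠ c') (hne : c' ≠ φ x) :
    ∃ y, G.Adj v y ∧ y ≠ x ∧ φ y = φ x := by
  obtain ⟨hmin', hv'⟩ := lem_swap_min G k φ hφ v hv x hx c' hc'k havoid
  have hx1 : φ x ≠ 1 := fun h => (hφ.1.2 hx) (by rw [hv, h])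
  obtain ⟨y, hy, hycol⟩ := lem_full G k _ hmin' v hv' (φ x) (hφ.1.1 x) hx1
  have hyx : y ≠ x := by
    rintro rfl
    rw [Function.update_self] at hycol
    exact hne hycol
  rw [Function.update_of_ne hyx] at hycol
  exact ⟨y, hy, hyx, hycol⟩

/-- `sn(G) = n-1` forbids uniquely extendable partial proper colourings missing two vertices. -/
lemma lem_nolow (hsn : sudokuNumber G k = Fintype.card V - 1)
    (x₁ x₂ : V) (hne : x₁ ≠ x₂) (φ : V → ℕ) (hprop : IsProperColouring G k φ)
    (hforce : ∀ θ : V → ℕ, IsProperColouring G k θ →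
      (∀ y, y ≠ x₁ → y ≠ x₂ → θ y = φ y) → θ = φ) :
    False := by
  classical
  set ψ : V → Option ℕ := fun y => if y = x₁ ∨ y = x₂ then none else some (φ y) with hψdef
  have hval : ∀ y c, ψ y = some c → φ y = c := by
    intro y c hy
    by_cases h : y = x₁ ∨ y = x₂
    · simp [hψdef, h] at hy
    · simp [hψdef, h] at hy
      exact hy
  have hext : ExtendsPartial φ ψ := hval
  have hpp : IsPartialProper G k ψ := by
    constructor
    · intro y c hy
      rw [← hval y c hy]
      exact hprop.1 y
    · intro p q hpq c hp hq
      exact hprop.2 hpq (by rw [hval p c hp, hval q c hq])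
  have hsud : IsSudoku G k ψ := by
    refine ⟨hpp, φ, ⟨hprop, hext⟩, ?_⟩
    rintro θ ⟨hθp, hθe⟩
    apply hforce θ hθp
    intro y hy1 hy2
    exact hθe y (φ y) (by simp [hψdef, hy1, hy2])
  have hcardset : (Finset.univ.filter fun y => (ψ y).isSome) = Finset.univ \ {x₁, x₂} := by
    ext y
    by_cases h1 : y = x₁
    · simp [hψdef, h1]
    · by_cases h2 : y = x₂ <;> simp [hψdef, h1, h2]
  have hcard : (Finset.univ.filter fun y => (ψ y).isSome).card = Fintype.card V - 2 := by
    rw [hcardset, Finset.card_sdiff_of_subset (Finset.subset_univ _), Finset.card_univ,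
      Finset.card_pair hne]
  have hle : sudokuNumber G k ≤ Fintype.card V - 2 := by
    unfold sudokuNumber
    exact Nat.sInf_le ⟨ψ, hsud, hcard⟩
  have h2 : 1 < Fintype.card V := Fintype.one_lt_card_iff.mpr ⟨x₁, x₂, hne⟩
  rw [hsn] at hle
  omega

/-- A colour-1 vertex cannot have a swappable neighbour. -/
lemma main_aux (hsn : sudokuNumber G k = Fintype.card V - 1) :
    ∀ m : ℕ, ∀ φ : V → ℕ, IsOneMinimal G k φ → ∀ v : V, φ v = 1 → ∀ u : V, G.Adj v u →
    ∀ c' : ℕ, c' ∈ Finset.Icc 1 k → (∀ y, G.Adj u y → φ y ≠ c') → c' ≠ φ u →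
    ((G.neighborFinset v).filter fun y => φ y = φ u).card = m → False := by
  intro m
  induction m using Nat.strong_induction_on with
  | _ m ih =>
    intro φ hφ v hv u hvu c' hc'k havoid hc'ne hm
    obtain ⟨u', hu'adj, hu'ne, hu'col⟩ :=
      lem_repeat G k φ hφ v hv u hvu c' hc'k havoid hc'ne
    by_cases hsw : ∃ c'', c'' ∈ Finset.Icc 1 k ∧ (∀ y, G.Adj u' y → φ y ≠ c'') ∧ c'' ≠ φ u'
    · -- u' is also swappable: swap it away and recurse on a smaller colour class.
      obtain ⟨c'', hc''k, havoid'', hc''ne⟩ := hsw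
      obtain ⟨hmin', hv'⟩ := lem_swap_min G k φ hφ v hv u' hu'adj c'' hc''k havoid''
      set φ' := Function.update φ u' c'' with hφ'def
      have hne_uu' : u ≠ u' := fun h => hu'ne h.symm
      have hnadj_uu' : ¬ G.Adj u u' := fun h => (hφ.1.2 h) hu'col.symm
      have hφ'u : φ' u = φ u := Function.update_of_ne hne_uu' _ _
      have havoid' : ∀ y, G.Adj u y → φ' y ≠ c' := by
        intro y hy
        have hyne : y ≠ u' := fun h => hnadj_uu' (h ▸ hy)
        rw [hφ'def, Function.update_of_ne hyne]
        exact havoid y hy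
      have hsetnew : ((G.neighborFinset v).filter fun y => φ' y = φ' u)
          = ((G.neighborFinset v).filter fun y => φ y = φ u).erase u' := by
        ext y
        by_cases hy : y = u'
        · subst hy
          simp only [Finset.mem_erase, ne_eq, not_true_eq_false, false_and, iff_false,
            Finset.mem_filter]
          rintro ⟨-, hcol⟩
          rw [hφ'def, Function.update_self, Function.update_of_ne hne_uu'] at hcol
          exact hc''ne (hcol.trans hu'col.symm)
        · simp only [Finset.mem_erase, Finset.mem_filter, hy, ne_eq, not_false_eq_true,
            true_and]
          rw [hφ'def, Function.update_of_ne hy, Function.update_of_ne hne_uu']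
      have hu'mem : u' ∈ (G.neighborFinset v).filter fun y => φ y = φ u := by
        simp [SimpleGraph.mem_neighborFinset, hu'adj, hu'col]
      have hcardnew : ((G.neighborFinset v).filter fun y => φ' y = φ' u).card = m - 1 := by
        rw [hsetnew, Finset.card_erase_of_mem hu'mem, hm]
      have hmpos : 0 < m := by
        rw [← hm]
        exact Finset.card_pos.mpr ⟨u', hu'mem⟩
      exact ih (m - 1) (by omega) φ' hmin' v hv' u hvu c'
        hc'k havoid' (by rw [hφ'u]; exact hc'ne) hcardnew
    · -- u' is not swappable: uncolouring {v, u'} gives a uniquely extendable partial colouring.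
      push_neg at hsw
      have hvu' : v ≠ u' := fun h => G.irrefl (h ▸ hu'adj)
      apply lem_nolow G k hsn v u' hvu' φ hφ.1
      intro θ hθ hagree
      have hune : u ≠ v := fun h => G.irrefl (h ▸ hvu)
      have huu' : u ≠ u' := fun h => hu'ne h.symm
      have hθv : θ v = 1 := by
        by_contra hne1
        obtain ⟨y, hy, hycol⟩ := lem_full G k φ hφ v hv (θ v) (hθ.1 v) hne1
        have hyv : y ≠ v := fun h => G.irrefl (h ▸ hy)
        by_cases hyu' : y = u'
        · -- the colour θ v equals φ u' = φ u ; use u instead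
          have h1 : θ u = φ u := hagree u hune huu'
          have h2 : φ u = θ v := by rw [← hu'col, ← hyu', hycol]
          exact (hθ.2 hvu) ((h1.trans h2).symm)
        · have h1 : θ y = φ y := hagree y hyv hyu'
          exact (hθ.2 hy) ((h1.trans hycol).symm)
      have hθu' : θ u' = φ u' := by
        apply hsw (θ u') (hθ.1 u')
        intro z hz
        by_cases hzv : z = v
        · rw [hzv, hv]
          exact fun h => (hθ.2 (G.adj_symm hu'adj)) (h ▸ hθv).symm
        · have hzu' : z ≠ u' := fun h => G.irrefl (h ▸ hz)
          rw [← hagree z hzv hzu']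
          exact hθ.2 (G.adj_symm hz)
      funext y
      by_cases hy1 : y = v
      · rw [hy1, hθv, hv]
      · by_cases hy2 : y = u'
        · rw [hy2, hθu']
        · exact hagree y hy1 hy2

end Aux

theorem stmt_7 {V : Type*} [Fintype V] [DecidableEq V]
    (G : SimpleGraph V) [DecidableRel G.Adj] (k : ℕ)
    (hχ : G.chromaticNumber = k)
    (hconn : G.Connected)
    (hsn : sudokuNumber G k = Fintype.card V - 1)
    (φ : V → ℕ) (hφ : IsOneMinimal G k φ)
    (v : V) (hv : φ v = 1) :
    ∀ a ∈ insert v (G.neighborFinset v), ∀ b ∈ insert v (G.neighborFinset v),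
      a ≠ b → G.Adj a b := by
  intro a ha b hb hab
  rw [Finset.mem_insert] at ha hb
  rcases ha with rfl | ha
  · rcases hb with rfl | hb
    · exact absurd rfl hab
    · exact (SimpleGraph.mem_neighborFinset G a b).mp hb
  · rcases hb with rfl | hb
    · exact G.adj_symm ((SimpleGraph.mem_neighborFinset G b a).mp ha)
    · have hva : G.Adj v a := (SimpleGraph.mem_neighborFinset G v a).mp ha
      have hvb : G.Adj v b := (SimpleGraph.mem_neighborFinset G v b).mp hb
      by_contra hnadj
      by_cases hsa : ∃ c', c' ∈ Finset.Icc 1 k ∧ (∀ y, G.Adj a y → φ y ≠ c') ∧ c' ≠ φ a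
      · obtain ⟨c', h1, h2, h3⟩ := hsa
        exact main_aux G k hsn _ φ hφ v hv a hva c' h1 h2 h3 rfl
      · by_cases hsb : ∃ c', c' ∈ Finset.Icc 1 k ∧ (∀ y, G.Adj b y → φ y ≠ c') ∧ c' ≠ φ b
        · obtain ⟨c', h1, h2, h3⟩ := hsb
          exact main_aux G k hsn _ φ hφ v hv b hvb c' h1 h2 h3 rfl
        · push_neg at hsa hsb
          apply lem_nolow G k hsn a b hab φ hφ.1
          intro θ hθ hagree
          have hθa : θ a = φ a := by
            apply hsa (θ a) (hθ.1 a)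
            intro y hy
            have hya : y ≠ a := fun h => G.irrefl (h ▸ hy)
            have hyb : y ≠ b := fun h => hnadj (h ▸ hy)
            rw [← hagree y hya hyb]
            exact hθ.2 (G.adj_symm hy)
          have hθb : θ b = φ b := by
            apply hsb (θ b) (hθ.1 b)
            intro y hy
            have hyb : y ≠ b := fun h => G.irrefl (h ▸ hy)
            have hya : y ≠ a := fun h => hnadj (G.adj_symm (h ▸ hy))
            rw [← hagree y hya hyb]
            exact hθ.2 (G.adj_symm hy)
          funext y
          by_cases hy1 : y = a
          · rw [hy1, hθa]
          · by_cases hy2 : y = b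
            · rw [hy2, hθb]
            · exact hagree y hy1 hy2
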